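/- Every positive (10,4)-reverse multiple M has units digit 8 and leading decimal digit 2; that is, M ≡ 8 (mod 10) and the last entry of Nat.digits 10 M (the most significant digit) equals 2. -/

import Mathlib

lemma aux (a:ℕ) (l : List ℕ) (h : l ≠ []) : (a :: l).getLast? = l.getLast? := by
  cases l with
  | nil => exact absurd rfl h
  | cons b t => exact List.getLast?_cons_cons

lemma lead_digit_bound : ∀ N : ℕ, N ≠ 0 → ∀ d : ℕ, (Nat.digits 10 N).getLast? = some d →
    d * 10 ^ ((Nat.digits 10 N).length - 1) ≤ N ∧
    N < (d + 1) * 10 ^ ((Nat.digits 10 N).length - 1) := by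
  intro N
  induction N using Nat.strong_induction_on with
  | _ N ih =>
    intro hN d hd
    rcases lt_or_ge N 10 with h10 | h10
    · rw [Nat.digits_of_lt 10 N hN h10] at hd ⊢
      simp at hd ⊢
      omega
    · have hq : N / 10 ≠ 0 := by omega
      have hdig : Nat.digits 10 N = N % 10 :: Nat.digits 10 (N / 10) :=
        Nat.digits_def' (by norm_num) (by omega)
      have htne : Nat.digits 10 (N / 10) ≠ [] := Nat.digits_ne_nil_iff_ne_zero.mpr hq
      rw [hdig] at hd ⊢
      rw [aux _ _ htne] at hd
      obtain ⟨h1, h2⟩ := ih (N / 10) (by omega) hq d hd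
      set k := (Nat.digits 10 (N / 10)).length with hk
      have hk1 : 1 ≤ k := List.length_pos_iff.mpr htne
      have hlen : (N % 10 :: Nat.digits 10 (N / 10)).length - 1 = k := by
        simp [hk]
      rw [hlen]
      have hpow : 10 ^ k = 10 * 10 ^ (k - 1) := by
        rw [← pow_succ']
        congr 1
        omega
      constructor
      · calc d * 10 ^ k = 10 * (d * 10 ^ (k-1)) := by rw [hpow]; ring
          _ ≤ 10 * (N / 10) := by omega
          _ ≤ N := Nat.mul_div_le N 10
      · have : N < 10 * (N / 10) + 10 := by omega
        calc N < 10 * (N / 10 + 1) := by omega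
          _ ≤ 10 * ((d + 1) * 10 ^ (k-1)) := by omega
          _ = (d + 1) * 10 ^ k := by rw [hpow]; ring

/-- Every positive `(10, 4)`-reverse multiple has units digit `8` and most significant
decimal digit `2`. -/
theorem stmt_13 (M : ℕ) (hM : 0 < M)
    (hrev : (Nat.digits 10 M).reverse = Nat.digits 10 (4 * M)) :
    M % 10 = 8 ∧ (Nat.digits 10 M).getLast? = some 2 := by
  have hM0 : M ≠ 0 := hM.ne'
  have h4M0 : 4 * M ≠ 0 := by omega
  have hlen : (Nat.digits 10 (4 * M)).length = (Nat.digits 10 M).length := by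
    rw [← hrev, List.length_reverse]
  have hdigM : Nat.digits 10 M = M % 10 :: Nat.digits 10 (M / 10) :=
    Nat.digits_def' (by norm_num) hM
  have hdig4 : Nat.digits 10 (4 * M) = (4 * M) % 10 :: Nat.digits 10 ((4 * M) / 10) :=
    Nat.digits_def' (by norm_num) (by omega)
  set a := M % 10 with ha
  set b := (4 * M) % 10 with hb
  -- getLast? of digits (4M) is a
  have hg4 : (Nat.digits 10 (4 * M)).getLast? = some a := by
    rw [← hrev, List.getLast?_reverse, hdigM]; rfl
  -- getLast? of digits M is b
  have hgM : (Nat.digits 10 M).getLast? = some b := by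
    rw [← List.head?_reverse, hrev, hdig4]; rfl
  have hab : b = (4 * a) % 10 := by
    rw [hb, ha, Nat.mul_mod, Nat.mul_mod 4 (M % 10)]
  -- b ≠ 0
  have hbne : b ≠ 0 := by
    have h := Nat.getLast_digit_ne_zero 10 hM0
    rw [List.getLast?_eq_getLast (Nat.digits_ne_nil_iff_ne_zero.mpr hM0)] at hgM
    intro h0
    exact h (by injection hgM with h'; omega)
  obtain ⟨hb1, hb2⟩ := lead_digit_bound M hM0 b hgM
  obtain ⟨ha1, ha2⟩ := lead_digit_bound (4 * M) h4M0 a hg4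
  rw [hlen] at ha1 ha2
  set n := (Nat.digits 10 M).length with hn
  have hn1 : 1 ≤ n := by
    rw [hn, hdigM]; simp
  have hpow : 10 ^ n = 10 * 10 ^ (n - 1) := by
    rw [← pow_succ']; congr 1; omega
  have hlt : 4 * M < 10 ^ n := by
    have := Nat.lt_base_pow_length_digits (b := 10) (m := 4 * M) (by norm_num)
    rwa [hlen] at this
  set P := 10 ^ (n - 1) with hP
  have hPpos : 0 < P := Nat.pow_pos (by norm_num)
  -- b ≤ 2
  have hble : b ≤ 2 := by
    have h1 : 4 * b * P ≤ 4 * M := by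
      calc 4 * b * P = 4 * (b * P) := by ring
        _ ≤ 4 * M := by omega
    have h2 : 4 * b * P < 10 * P := by
      rw [hpow] at hlt; omega
    have := Nat.lt_of_mul_lt_mul_right h2
    omega
  have hb2' : b = 2 := by omega
  -- a ≥ 8
  have halt : 10 > a := by omega
  have hage : 8 ≤ a := by
    have h1 : 8 * P ≤ 4 * M := by
      have : 2 * P ≤ M := by rw [← hb2']; exact hb1
      omega
    have h2 : 8 * P < (a + 1) * P := by omega
    have := Nat.lt_of_mul_lt_mul_right h2
    omega
  have ha8 : a = 8 := by omega
  exact ⟨ha8, by rw [hgM, hb2']⟩
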